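/- arXiv:2310.08563 — 2 statements merged into one kernel-verified Lean document; each statement's English description precedes it below -/
import Mathlib

section
/- Let S be a finite set with n ≥ 3 elements. Then the complement of the (n-1)-partition graph G[S, n-1] is isomorphic to the Kneser graph K(n,2), whose vertices are the 2-element subsets of S and in which two 2-element subsets are adjacent if and only if they are disjoint. -/
open Finset

/-- The parts of a partition after removing the point `x`, discarding empty parts. -/
def eraseParts {α : Type*} [DecidableEq α] (parts : Finset (Finset α)) (x : α) :
    Finset (Finset α) :=
  (parts.image fun t => t.erase x).filter fun t => t.Nonempty

/-- The `r`-partition graph of a finite set `S`: vertices are the partitions of `S`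
into exactly `r` nonempty parts, and two partitions are adjacent iff their partition
distance is `1`, i.e. there is exactly one element `x ∈ S` whose removal makes the two
partitions agree on `S \ {x}`. -/
def partitionGraph {α : Type*} [DecidableEq α] (S : Finset α) (r : ℕ) :
    SimpleGraph {P : Finpartition S // P.parts.card = r} where
  Adj P Q := P ≠ Q ∧ ∃! x, x ∈ S ∧ eraseParts P.1.parts x = eraseParts Q.1.parts x
  symm := by
    constructor
    rintro P Q ⟨hne, x, ⟨hx1, hx2⟩, hu⟩
    exact ⟨hne.symm, x, ⟨hx1, hx2.symm⟩, fun y hy => hu y ⟨hy.1, hy.2.symm⟩⟩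
  loopless := ⟨by rintro P ⟨h, -⟩; exact h rfl⟩

/-- The Kneser graph `K(n,2)` on the `2`-element subsets of a finite set `S`: two
`2`-element subsets are adjacent iff they are disjoint. -/
def kneserGraphTwo {α : Type*} [DecidableEq α] (S : Finset α) :
    SimpleGraph {t : Finset α // t ⊆ S ∧ t.card = 2} where
  Adj a b := Disjoint a.1 b.1
  symm := ⟨fun _ _ h => h.symm⟩
  loopless := by
    constructor
    rintro ⟨t, hts, ht2⟩ h
    rw [disjoint_self] at h
    subst h
    simp at ht2

namespace PGAux

variable {α : Type*} [DecidableEq α]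

/-- The parts of the partition of `S` whose only non-singleton part is `t`. -/
def pairParts (S t : Finset α) : Finset (Finset α) :=
  insert t ((S \ t).image fun x => ({x} : Finset α))

lemma mem_pairParts {S t s : Finset α} :
    s ∈ pairParts S t ↔ s = t ∨ ∃ x, x ∈ S ∧ x ∉ t ∧ s = {x} := by
  simp only [pairParts, mem_insert, mem_image, mem_sdiff]
  constructor
  · rintro (h | ⟨x, ⟨hx1, hx2⟩, rfl⟩)
    · exact Or.inl h
    · exact Or.inr ⟨x, hx1, hx2, rfl⟩
  · rintro (h | ⟨x, hx1, hx2, rfl⟩)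
    · exact Or.inl h
    · exact Or.inr ⟨x, ⟨hx1, hx2⟩, rfl⟩

lemma mem_eraseParts {parts : Finset (Finset α)} {x : α} {s : Finset α} :
    s ∈ eraseParts parts x ↔ s.Nonempty ∧ ∃ p ∈ parts, s = p.erase x := by
  simp only [eraseParts, mem_filter, mem_image]
  constructor
  · rintro ⟨⟨p, hp, rfl⟩, hne⟩
    exact ⟨hne, p, hp, rfl⟩
  · rintro ⟨hne, p, hp, rfl⟩
    exact ⟨⟨p, hp, rfl⟩, hne⟩

/-- The partition of `S` whose only non-singleton part is a given pair `t`. -/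
def pairFinpartition (S t : Finset α) (hts : t ⊆ S) (ht2 : t.card = 2) :
    Finpartition S where
  parts := pairParts S t
  supIndep := by
    rw [Finset.supIndep_iff_pairwiseDisjoint]
    intro s1 h1 s2 h2 hne
    rw [Finset.mem_coe, mem_pairParts] at h1 h2
    rcases h1 with rfl | ⟨x, -, hxt, rfl⟩ <;> rcases h2 with rfl | ⟨y, -, hyt, rfl⟩
    · exact absurd rfl hne
    · exact Finset.disjoint_singleton_right.mpr hyt
    · exact Finset.disjoint_singleton_left.mpr hxt
    · exact Finset.disjoint_singleton_right.mpr
        (fun h => hne (by rw [mem_singleton.mp h]))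
  sup_parts := by
    ext a
    simp only [Finset.mem_sup, id, pairParts, mem_insert, mem_image, mem_sdiff]
    constructor
    · rintro ⟨v, (rfl | ⟨x, ⟨hx1, -⟩, rfl⟩), hav⟩
      · exact hts hav
      · rwa [mem_singleton.mp hav]
    · intro ha
      by_cases hat : a ∈ t
      · exact ⟨t, Or.inl rfl, hat⟩
      · exact ⟨{a}, Or.inr ⟨a, ⟨ha, hat⟩, rfl⟩, mem_singleton_self a⟩
  bot_notMem := by
    rw [bot_eq_empty, mem_pairParts]
    rintro (h | ⟨x, -, -, h⟩)
    · rw [← h] at ht2; simp at ht2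
    · exact (singleton_ne_empty x) h.symm

lemma parts_pairFinpartition (S t : Finset α) (hts : t ⊆ S) (ht2 : t.card = 2) :
    (pairFinpartition S t hts ht2).parts = pairParts S t := rfl

lemma card_pairParts {S t : Finset α} (hts : t ⊆ S) (ht2 : t.card = 2) :
    (pairParts S t).card = S.card - 1 := by
  have h1 : t ∉ (S \ t).image fun x => ({x} : Finset α) := by
    rw [mem_image]
    rintro ⟨x, -, h⟩
    rw [← h] at ht2; simp at ht2
  have h2 : ((S \ t).image fun x => ({x} : Finset α)).card = (S \ t).card :=
    Finset.card_image_of_injective _ fun a b h => singleton_injective h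
  have h3 : (S \ t).card = S.card - 2 := by rw [card_sdiff_of_subset hts, ht2]
  have h4 : 2 ≤ S.card := ht2 ▸ card_le_card hts
  rw [pairParts, card_insert_of_notMem h1, h2, h3]
  omega

lemma pairParts_injective {S t u : Finset α} (ht2 : t.card = 2)
    (h : pairParts S t = pairParts S u) : t = u := by
  have ht : t ∈ pairParts S u := by rw [← h]; exact mem_insert_self t _
  rcases mem_pairParts.mp ht with h' | ⟨x, -, -, rfl⟩
  · exact h'
  · simp at ht2

/-- Removing a point of the pair turns everything into singletons. -/
lemma eraseParts_pairParts_mem {S t : Finset α} (hts : t ⊆ S) (ht2 : t.card = 2)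
    {x : α} (hx : x ∈ t) :
    eraseParts (pairParts S t) x = (S.erase x).image fun z => ({z} : Finset α) := by
  ext s
  rw [mem_eraseParts]
  simp only [mem_image, Finset.mem_erase]
  constructor
  · rintro ⟨hne, p, hp, rfl⟩
    rcases mem_pairParts.mp hp with rfl | ⟨z, hz1, hz2, rfl⟩
    · obtain ⟨y, hy⟩ := hne
      have hyx : y ≠ x := (Finset.mem_erase.mp hy).1
      have hyp : y ∈ p := (Finset.mem_erase.mp hy).2
      refine ⟨y, ⟨hyx, hts hyp⟩, ?_⟩
      refine Finset.eq_of_subset_of_card_le (singleton_subset_iff.mpr hy) ?_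
      rw [card_erase_of_mem hx, ht2, card_singleton]
    · have hzx : z ≠ x := by rintro rfl; exact hz2 hx
      have hzz : ({z} : Finset α).erase x = {z} :=
        Finset.erase_eq_of_notMem (fun h => hzx (mem_singleton.mp h).symm)
      exact ⟨z, ⟨hzx, hz1⟩, hzz.symm⟩
  · rintro ⟨z, ⟨hzx, hzS⟩, rfl⟩
    by_cases hzt : z ∈ t
    · refine ⟨singleton_nonempty z, t, mem_insert_self t _, ?_⟩
      have hz : z ∈ t.erase x := Finset.mem_erase.mpr ⟨hzx, hzt⟩
      refine (Finset.eq_of_subset_of_card_le (singleton_subset_iff.mpr hz) ?_)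
      rw [card_erase_of_mem hx, ht2, card_singleton]
    · refine ⟨singleton_nonempty z, {z}, mem_pairParts.mpr (Or.inr ⟨z, hzS, hzt, rfl⟩), ?_⟩
      exact (Finset.erase_eq_of_notMem (fun h => hzx (mem_singleton.mp h).symm)).symm

lemma not_mem_eraseParts {S t u : Finset α} (ht2 : t.card = 2) (hu2 : u.card = 2)
    (hne : t ≠ u) {x : α} (hxu : x ∉ u) : u ∉ eraseParts (pairParts S t) x := by
  rw [mem_eraseParts]
  rintro ⟨-, p, hp, hup⟩
  rcases mem_pairParts.mp hp with rfl | ⟨z, -, -, rfl⟩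
  · by_cases hxt : x ∈ p
    · rw [hup, card_erase_of_mem hxt, ht2] at hu2
      omega
    · rw [Finset.erase_eq_of_notMem hxt] at hup
      exact hne hup.symm
  · rw [hup] at hu2
    have hle : ({z} : Finset α).erase x ⊆ {z} := Finset.erase_subset _ _
    have := (card_le_card hle).trans_eq (card_singleton z)
    omega

lemma mem_eraseParts_self {S u : Finset α} (hu2 : u.card = 2) {x : α} (hxu : x ∉ u) :
    u ∈ eraseParts (pairParts S u) x := by
  rw [mem_eraseParts]
  exact ⟨Finset.card_pos.mp (by omega), u, mem_insert_self u _,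
    (Finset.erase_eq_of_notMem hxu).symm⟩

lemma inter_card_le_one {t u : Finset α} (ht2 : t.card = 2) (hu2 : u.card = 2)
    (hne : t ≠ u) : (t ∩ u).card ≤ 1 := by
  by_contra h
  have hsub : t ∩ u ⊆ t := Finset.inter_subset_left
  have h2 : (t ∩ u).card ≤ 2 := ht2 ▸ card_le_card hsub
  have heq : t ∩ u = t := Finset.eq_of_subset_of_card_le hsub (by omega)
  have htu : t ⊆ u := heq ▸ Finset.inter_subset_right
  exact hne (Finset.eq_of_subset_of_card_le htu (by omega))

/-- Structure theorem: a partition of an `n`-set into `n-1` parts consists of a pair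
and singletons. -/
lemma parts_eq_pairParts {S : Finset α} {n : ℕ} (hn : S.card = n) (h3 : 3 ≤ n)
    (P : Finpartition S) (hcard : P.parts.card = n - 1) :
    ∃ t, t ⊆ S ∧ t.card = 2 ∧ P.parts = pairParts S t := by
  have hsum : ∑ p ∈ P.parts, p.card = n := by rw [P.sum_card_parts, hn]
  have h1 : ∀ p ∈ P.parts, 1 ≤ p.card := fun p hp =>
    Finset.card_pos.mpr (P.nonempty_of_mem_parts hp)
  have hsum1 : ∑ p ∈ P.parts, (p.card - 1) = 1 := by
    have : ∑ p ∈ P.parts, p.card = ∑ p ∈ P.parts, ((p.card - 1) + 1) :=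
      Finset.sum_congr rfl fun p hp => by have := h1 p hp; omega
    rw [Finset.sum_add_distrib, Finset.sum_const, smul_eq_mul, mul_one, hcard] at this
    omega
  obtain ⟨t, ht, htne⟩ : ∃ p ∈ P.parts, p.card - 1 ≠ 0 := by
    by_contra h
    push_neg at h
    rw [Finset.sum_eq_zero h] at hsum1
    omega
  have hsplit : ∑ p ∈ P.parts.erase t, (p.card - 1) + (t.card - 1)
      = ∑ p ∈ P.parts, (p.card - 1) := Finset.sum_erase_add _ _ ht
  have hrest : ∑ p ∈ P.parts.erase t, (p.card - 1) = 0 := by omega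
  have ht1 := h1 t ht
  have ht2 : t.card = 2 := by omega
  have hsingle : ∀ p ∈ P.parts, p ≠ t → p.card = 1 := by
    intro p hp hne
    have hp' : p ∈ P.parts.erase t := Finset.mem_erase.mpr ⟨hne, hp⟩
    have := (Finset.sum_eq_zero_iff.mp hrest) p hp'
    have := h1 p hp
    omega
  have hts : t ⊆ S := P.le ht
  refine ⟨t, hts, ht2, ?_⟩
  have hdisj : (P.parts : Set (Finset α)).PairwiseDisjoint id :=
    Finset.supIndep_iff_pairwiseDisjoint.mp P.supIndep
  ext s
  rw [mem_pairParts]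
  constructor
  · intro hs
    by_cases hst : s = t
    · exact Or.inl hst
    · obtain ⟨z, hz⟩ := Finset.card_eq_one.mp (hsingle s hs hst)
      subst hz
      have hzS : z ∈ S := P.le hs (mem_singleton_self z)
      have hzt : z ∉ t := by
        intro hzt
        have := hdisj hs ht hst
        exact (Finset.disjoint_left.mp this (mem_singleton_self z)) hzt
      exact Or.inr ⟨z, hzS, hzt, rfl⟩
  · rintro (rfl | ⟨z, hzS, hzt, rfl⟩)
    · exact ht
    · obtain ⟨p, hp, hzp⟩ := P.exists_mem hzS
      have hpt : p ≠ t := by rintro rfl; exact hzt hzp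
      obtain ⟨w, hw⟩ := Finset.card_eq_one.mp (hsingle p hp hpt)
      subst hw
      rw [mem_singleton.mp hzp] at *
      exact hp

end PGAux

open PGAux in
/-- For an `n`-element set `S` with `n ≥ 3`, the complement of the `(n-1)`-partition
graph `G[S, n-1]` is isomorphic to the Kneser graph `K(n,2)`. -/
theorem compl_partitionGraph_iso_kneser {α : Type*} [DecidableEq α] (S : Finset α)
    (n : ℕ) (hn : S.card = n) (h3 : 3 ≤ n) :
    Nonempty ((partitionGraph S (n - 1))ᶜ ≃g kneserGraphTwo S) := by
  classical
  -- the map from pairs to partitions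
  let f : {t : Finset α // t ⊆ S ∧ t.card = 2} → {P : Finpartition S // P.parts.card = n - 1} :=
    fun t => ⟨pairFinpartition S t.1 t.2.1 t.2.2, by
      rw [parts_pairFinpartition, card_pairParts t.2.1 t.2.2, hn]⟩
  have hfparts : ∀ t, (f t).1.parts = pairParts S t.1 := fun t => rfl
  have hinj : Function.Injective f := by
    rintro ⟨t, hts, ht2⟩ ⟨u, hus, hu2⟩ h
    have : pairParts S t = pairParts S u := by
      have := congrArg (fun P => P.1.parts) h
      simpa [hfparts] using this
    exact Subtype.ext (pairParts_injective ht2 this)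
  have hsurj : Function.Surjective f := by
    rintro ⟨P, hP⟩
    obtain ⟨t, hts, ht2, hparts⟩ := parts_eq_pairParts hn h3 P hP
    refine ⟨⟨t, hts, ht2⟩, ?_⟩
    apply Subtype.ext
    apply Finpartition.ext
    rw [hfparts, hparts]
  let e := Equiv.ofBijective f ⟨hinj, hsurj⟩
  -- the key adjacency equivalence
  have key : ∀ t u : {t : Finset α // t ⊆ S ∧ t.card = 2},
      ((partitionGraph S (n - 1))ᶜ).Adj (e t) (e u) ↔ (kneserGraphTwo S).Adj t u := by
    rintro ⟨t, hts, ht2⟩ ⟨u, hus, hu2⟩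
    rw [SimpleGraph.compl_adj]
    show _ ↔ Disjoint t u
    constructor
    · rintro ⟨hne, hnadj⟩
      have hne' : t ≠ u := by
        rintro rfl
        exact hne rfl
      by_contra hd
      obtain ⟨a, hat, hau⟩ := Finset.not_disjoint_iff.mp hd
      apply hnadj
      refine ⟨hne, a, ⟨hts hat, ?_⟩, ?_⟩
      · show eraseParts (pairParts S t) a = eraseParts (pairParts S u) a
        rw [eraseParts_pairParts_mem hts ht2 hat, eraseParts_pairParts_mem hus hu2 hau]
      · rintro y ⟨hyS, hy⟩
        replace hy : eraseParts (pairParts S t) y = eraseParts (pairParts S u) y := hy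
        have hyt : y ∈ t := by
          by_contra hyt
          have h1 : t ∈ eraseParts (pairParts S t) y := mem_eraseParts_self ht2 hyt
          have h2 : t ∉ eraseParts (pairParts S u) y :=
            not_mem_eraseParts hu2 ht2 hne'.symm hyt
          exact h2 (hy ▸ h1)
        have hyu : y ∈ u := by
          by_contra hyu
          have h1 : u ∈ eraseParts (pairParts S u) y := mem_eraseParts_self hu2 hyu
          have h2 : u ∉ eraseParts (pairParts S t) y :=
            not_mem_eraseParts ht2 hu2 hne' hyu
          exact h2 (hy.symm ▸ h1)
        have hcard := inter_card_le_one ht2 hu2 hne'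
        have hy' : y ∈ t ∩ u := Finset.mem_inter.mpr ⟨hyt, hyu⟩
        have ha' : a ∈ t ∩ u := Finset.mem_inter.mpr ⟨hat, hau⟩
        exact Finset.card_le_one.mp hcard _ hy' _ ha'
    · intro hd
      have hne' : t ≠ u := by
        rintro rfl
        rw [disjoint_self, Finset.bot_eq_empty] at hd
        rw [hd] at ht2
        simp at ht2
      constructor
      · intro h
        exact hne' (congrArg Subtype.val (e.injective h))
      · rintro ⟨-, x, ⟨hxS, hx⟩, -⟩
        replace hx : eraseParts (pairParts S t) x = eraseParts (pairParts S u) x := hx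
        by_cases hxu : x ∈ u
        · have hxt : x ∉ t := Finset.disjoint_right.mp hd hxu
          have h1 : t ∈ eraseParts (pairParts S t) x := mem_eraseParts_self ht2 hxt
          have h2 : t ∉ eraseParts (pairParts S u) x :=
            not_mem_eraseParts hu2 ht2 hne'.symm hxt
          exact h2 (hx ▸ h1)
        · have h1 : u ∈ eraseParts (pairParts S u) x := mem_eraseParts_self hu2 hxu
          have h2 : u ∉ eraseParts (pairParts S t) x :=
            not_mem_eraseParts ht2 hu2 hne' hxu
          exact h2 (hx.symm ▸ h1)
  let iso : kneserGraphTwo S ≃g (partitionGraph S (n - 1))ᶜ := ⟨e, fun {a b} => key a b⟩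
  exact ⟨iso.symm⟩
end

section
/- For any finite set S of points in ℝ^d, the Radon partition graph G_T[S,2] is connected. -/
open Finset

noncomputable instance (d : ℕ) : DecidableEq (EuclideanSpace ℝ (Fin d)) :=
  Classical.decEq _

/-- A Tverberg partition: the convex hulls of all the parts have a common point. -/
def Finpartition.IsTverberg {d : ℕ} {S : Finset (EuclideanSpace ℝ (Fin d))}
    (P : Finpartition S) : Prop :=
  (⋂ t ∈ P.parts, convexHull ℝ (t : Set (EuclideanSpace ℝ (Fin d)))).Nonempty

/-- Vertices of the Tverberg `r`-partition graph of `S`: Tverberg partitions of `S`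
into `r` parts. -/
def TverbergPartition {d : ℕ} (S : Finset (EuclideanSpace ℝ (Fin d))) (r : ℕ) :=
  {P : Finpartition S // P.parts.card = r ∧ P.IsTverberg}

/-- The Tverberg `r`-partition graph of `S`: two Tverberg partitions are adjacent iff
there is exactly one point `x ∈ S` whose removal from its part in each partition yields
the same partition of `S \ {x}`. -/
def tverbergGraph {d : ℕ} (S : Finset (EuclideanSpace ℝ (Fin d))) (r : ℕ) :
    SimpleGraph (TverbergPartition S r) where
  Adj P Q := P ≠ Q ∧ ∃! x, x ∈ S ∧ eraseParts P.1.parts x = eraseParts Q.1.parts x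
  symm := by
    refine ⟨?_⟩
    rintro P Q ⟨hne, x, ⟨hx1, hx2⟩, hu⟩
    exact ⟨hne.symm, x, ⟨hx1, hx2.symm⟩, fun y hy => hu y ⟨hy.1, hy.2.symm⟩⟩
  loopless := ⟨by rintro P ⟨h, -⟩; exact h rfl⟩

namespace RadonAux

variable {d : ℕ}

local notation "E" => EuclideanSpace ℝ (Fin d)

lemma vertex_ext {S : Finset E} {P Q : TverbergPartition S 2}
    (h : P.1.parts = Q.1.parts) : P = Q :=
  Subtype.ext (Finpartition.ext h)

/-- Positive support of a weight function. -/
noncomputable def pos (S : Finset E) (v : E → ℝ) : Finset E :=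
  S.filter fun y => 0 < v y

/-- Negative support of a weight function. -/
noncomputable def neg (S : Finset E) (v : E → ℝ) : Finset E :=
  S.filter fun y => v y < 0

/-- An affine dependence supported on `S`. -/
def IsDep (S : Finset E) (v : E → ℝ) : Prop :=
  ∑ y ∈ S, v y = 0 ∧ ∑ y ∈ S, v y • y = (0 : E) ∧ ∃ y ∈ S, v y ≠ 0

lemma sum_split {M : Type*} [AddCommMonoid M] (S : Finset E) (v : E → ℝ) (f : E → M)
    (hf : ∀ y, v y = 0 → f y = 0) :
    ∑ y ∈ pos S v, f y + ∑ y ∈ neg S v, f y = ∑ y ∈ S, f y := by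
  classical
  have hdisj : Disjoint (pos S v) (neg S v) := by
    rw [Finset.disjoint_left]
    intro a ha hb
    exact absurd (Finset.mem_filter.1 ha).2 (not_lt.2 (le_of_lt (Finset.mem_filter.1 hb).2))
  rw [← Finset.sum_union hdisj]
  apply Finset.sum_subset
  · exact Finset.union_subset (Finset.filter_subset _ _) (Finset.filter_subset _ _)
  · intro y hy hyn
    simp only [Finset.mem_union, pos, neg, Finset.mem_filter, not_or, not_and, not_lt] at hyn
    exact hf y (le_antisymm (hyn.1 hy) (hyn.2 hy))

lemma sum_pos_pos {S : Finset E} {v : E → ℝ} (h : IsDep S v) :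
    0 < ∑ y ∈ pos S v, v y := by
  have hsum : ∑ y ∈ pos S v, v y + ∑ y ∈ neg S v, v y = 0 := by
    rw [sum_split S v v (fun _ h => h)]; exact h.1
  obtain ⟨y, hyS, hy⟩ := h.2.2
  rcases lt_or_gt_of_ne hy with hneg | hpos
  · have h1 : -v y ≤ ∑ z ∈ neg S v, -v z :=
      Finset.single_le_sum (f := fun z => -v z)
        (fun i hi => neg_nonneg.2 (le_of_lt (Finset.mem_filter.1 hi).2))
        (Finset.mem_filter.2 ⟨hyS, hneg⟩)
    have h2 : ∑ z ∈ neg S v, -v z = -∑ z ∈ neg S v, v z := by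
      rw [Finset.sum_neg_distrib]
    linarith
  · have h1 : v y ≤ ∑ z ∈ pos S v, v z :=
      Finset.single_le_sum (f := v)
        (fun i hi => le_of_lt (Finset.mem_filter.1 hi).2)
        (Finset.mem_filter.2 ⟨hyS, hpos⟩)
    linarith

lemma pos_nonempty {S : Finset E} {v : E → ℝ} (h : IsDep S v) : (pos S v).Nonempty :=
  Finset.nonempty_of_sum_ne_zero (ne_of_gt (sum_pos_pos h))

lemma neg_nonempty {S : Finset E} {v : E → ℝ} (h : IsDep S v) : (neg S v).Nonempty := by
  apply Finset.nonempty_of_sum_ne_zero (f := v)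
  have hsum : ∑ y ∈ pos S v, v y + ∑ y ∈ neg S v, v y = 0 := by
    rw [sum_split S v v (fun _ h => h)]; exact h.1
  have := sum_pos_pos h
  intro h0; rw [h0] at hsum; linarith

lemma hull_inter_nonempty {S : Finset E} {v : E → ℝ} (h : IsDep S v) {A B : Finset E}
    (hA : pos S v ⊆ A) (hB : neg S v ⊆ B) :
    ((convexHull ℝ (A : Set E)) ∩ convexHull ℝ (B : Set E)).Nonempty := by
  have hs : 0 < ∑ y ∈ pos S v, v y := sum_pos_pos h
  have hvec : ∑ y ∈ pos S v, v y • y + ∑ y ∈ neg S v, v y • y = 0 := by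
    rw [sum_split S v (fun y => v y • y) (fun y hy => by show v y • y = 0; rw [hy, zero_smul])]
    exact h.2.1
  have hsum : ∑ y ∈ pos S v, v y + ∑ y ∈ neg S v, v y = 0 := by
    rw [sum_split S v v (fun _ h => h)]; exact h.1
  have h1 : ∑ y ∈ neg S v, -v y = ∑ y ∈ pos S v, v y := by
    rw [Finset.sum_neg_distrib]; linarith
  have h2 : ∑ y ∈ neg S v, (-v y) • y = ∑ y ∈ pos S v, v y • y := by
    have h3 : ∑ y ∈ neg S v, (-v y) • y = -∑ y ∈ neg S v, v y • y := by
      rw [← Finset.sum_neg_distrib]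
      exact Finset.sum_congr rfl fun y _ => neg_smul _ _
    rw [h3]
    exact neg_eq_of_add_eq_zero_left hvec
  refine ⟨(pos S v).centerMass v id, ?_, ?_⟩
  · exact Finset.centerMass_mem_convexHull _
      (fun i hi => le_of_lt (Finset.mem_filter.1 hi).2) hs
      (fun i hi => Finset.mem_coe.2 (hA hi))
  · have hq : (pos S v).centerMass v id = (neg S v).centerMass (fun y => -v y) id := by
      unfold Finset.centerMass
      simp only [id_eq]
      rw [h1, h2]
    rw [hq]
    refine Finset.centerMass_mem_convexHull _
      (fun i hi => neg_nonneg.2 (le_of_lt (Finset.mem_filter.1 hi).2)) ?_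
      (fun i hi => Finset.mem_coe.2 (hB hi))
    show 0 < ∑ y ∈ neg S v, -v y
    rw [h1]; exact hs

lemma exists_vertex (S A B : Finset E) (hA : A.Nonempty) (hB : B.Nonempty)
    (hd : Disjoint A B) (hU : A ∪ B = S)
    (htv : ((convexHull ℝ (A : Set E)) ∩ convexHull ℝ (B : Set E)).Nonempty) :
    ∃ P : TverbergPartition S 2, P.1.parts = {A, B} := by
  have hne : A ≠ B := by
    rintro rfl
    exact hA.ne_empty (Finset.bot_eq_empty ▸ disjoint_self.1 hd)
  let F : Finpartition S := Finpartition.copy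
    { parts := {A, B}
      supIndep := (Finset.supIndep_pair hne).2 hd
      sup_parts := by
        rw [Finset.sup_insert, Finset.sup_singleton]
        exact Finset.sup_eq_union
      bot_notMem := by
        simp only [Finset.bot_eq_empty, Finset.mem_insert, Finset.mem_singleton]
        push_neg
        exact ⟨Ne.symm hA.ne_empty, Ne.symm hB.ne_empty⟩ } hU
  have hF : F.parts = {A, B} := rfl
  refine ⟨⟨F, ?_, ?_⟩, hF⟩
  · rw [hF]; exact Finset.card_pair hne
  · obtain ⟨q, hqA, hqB⟩ := htv
    refine ⟨q, Set.mem_iInter₂.2 ?_⟩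
    intro t ht
    rw [hF] at ht
    rcases Finset.mem_insert.1 ht with rfl | ht
    · exact hqA
    · rw [Finset.mem_singleton.1 ht]
      exact hqB

lemma adj_move {S : Finset E} {P Q : TverbergPartition S 2} {A B : Finset E} {x : E}
    (hA : A.Nonempty) (hB : B.Nonempty) (hxA : x ∉ A) (hxB : x ∉ B)
    (hd : Disjoint A B) (hU : insert x A ∪ B = S)
    (hP : P.1.parts = {insert x A, B}) (hQ : Q.1.parts = {A, insert x B}) :
    (tverbergGraph S 2).Adj P Q := by
  have hxS : x ∈ S := hU ▸ Finset.mem_union_left _ (Finset.mem_insert_self _ _)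
  constructor
  · intro h
    rw [h, hQ] at hP
    have hmem : A ∈ ({insert x A, B} : Finset (Finset E)) := hP ▸ Finset.mem_insert_self _ _
    rcases Finset.mem_insert.1 hmem with h1 | h1
    · exact hxA (h1 ▸ Finset.mem_insert_self x A)
    · rw [Finset.mem_singleton] at h1
      obtain ⟨a, ha⟩ := hA
      exact (Finset.disjoint_left.1 hd ha) (h1 ▸ ha)
  · refine ⟨x, ⟨hxS, ?_⟩, ?_⟩
    · rw [hP, hQ]
      unfold eraseParts
      rw [Finset.image_insert, Finset.image_singleton, Finset.image_insert,
        Finset.image_singleton, Finset.erase_insert hxA, Finset.erase_insert hxB,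
        Finset.erase_eq_of_notMem hxB, Finset.erase_eq_of_notMem hxA]
    · rintro y ⟨hyS, hy⟩
      by_contra hyx
      have hyAB : y ∈ insert x A ∪ B := hU ▸ hyS
      have hmem : ∀ (parts : Finset (Finset E)) (t : Finset E),
          t ∈ eraseParts parts y ↔ t.Nonempty ∧ ∃ s ∈ parts, s.erase y = t := by
        intro parts t
        unfold eraseParts
        simp only [Finset.mem_filter, Finset.mem_image]
        tauto
      rcases Finset.mem_union.1 hyAB with hyA | hyB
      · have hyA' : y ∈ A := by
          rcases Finset.mem_insert.1 hyA with h1 | h1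
          · exact absurd h1 hyx
          · exact h1
        have hBP : B ∈ eraseParts P.1.parts y := by
          rw [hmem, hP]
          refine ⟨hB, B, Finset.mem_insert_of_mem (Finset.mem_singleton_self B), ?_⟩
          exact Finset.erase_eq_of_notMem (Finset.disjoint_left.1 hd hyA')
        have hBQ : B ∉ eraseParts Q.1.parts y := by
          rw [hmem, hQ]
          rintro ⟨-, s, hs, hse⟩
          rcases Finset.mem_insert.1 hs with rfl | hs
          · obtain ⟨b, hb⟩ := hB
            have : b ∈ s.erase y := hse ▸ hb
            exact Finset.disjoint_right.1 hd hb (Finset.mem_of_mem_erase this)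
          · rw [Finset.mem_singleton] at hs
            subst hs
            rw [Finset.erase_insert_of_ne (Ne.symm hyx),
              Finset.erase_eq_of_notMem (Finset.disjoint_left.1 hd hyA')] at hse
            exact hxB (hse ▸ Finset.mem_insert_self x B)
        rw [hy] at hBP
        exact hBQ hBP
      · have hAQ : A ∈ eraseParts Q.1.parts y := by
          rw [hmem, hQ]
          exact ⟨hA, A, Finset.mem_insert_self _ _,
            Finset.erase_eq_of_notMem (Finset.disjoint_left.1 hd.symm hyB)⟩
        have hAP : A ∉ eraseParts P.1.parts y := by
          rw [hmem, hP]
          rintro ⟨-, s, hs, hse⟩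
          rcases Finset.mem_insert.1 hs with rfl | hs
          · rw [Finset.erase_insert_of_ne (Ne.symm hyx),
              Finset.erase_eq_of_notMem (Finset.disjoint_left.1 hd.symm hyB)] at hse
            exact hxA (hse ▸ Finset.mem_insert_self x A)
          · rw [Finset.mem_singleton] at hs
            subst hs
            obtain ⟨a, ha⟩ := hA
            have : a ∈ s.erase y := hse ▸ ha
            exact Finset.disjoint_left.1 hd ha (Finset.mem_of_mem_erase this)
        rw [← hy] at hAQ
        exact hAP hAQ

lemma reach_of_compat {S : Finset E} {v : E → ℝ} (hdep : IsDep S v) :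
    ∀ (n : ℕ) (A B A' B' : Finset E), A ∪ B = S → Disjoint A B → A' ∪ B' = S →
    Disjoint A' B' → pos S v ⊆ A → neg S v ⊆ B → pos S v ⊆ A' → neg S v ⊆ B' →
    ((A \ A') ∪ (A' \ A)).card ≤ n →
    ∀ (P Q : TverbergPartition S 2), P.1.parts = {A, B} → Q.1.parts = {A', B'} →
    (tverbergGraph S 2).Reachable P Q := by
  intro n
  induction n with
  | zero =>
    intro A B A' B' hU hd hU' hd' hpA hnB hpA' hnB' hcard P Q hP hQ
    have hAA : A = A' := by
      have h0 : ((A \ A') ∪ (A' \ A)) = ∅ := Finset.card_eq_zero.1 (Nat.le_zero.1 hcard)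
      have h1 : A \ A' = ∅ ∧ A' \ A = ∅ := by
        constructor <;> [exact Finset.union_eq_empty.1 h0 |>.1; exact Finset.union_eq_empty.1 h0 |>.2]
      exact Finset.Subset.antisymm (Finset.sdiff_eq_empty_iff_subset.1 h1.1)
        (Finset.sdiff_eq_empty_iff_subset.1 h1.2)
    have hBB : B = B' := by
      have h1 : B = S \ A := by rw [← hU, Finset.union_sdiff_cancel_left hd]
      have h2 : B' = S \ A' := by rw [← hU', Finset.union_sdiff_cancel_left hd']
      rw [h1, h2, hAA]
    subst hAA; subst hBB
    exact (vertex_ext (hP.trans hQ.symm) : P = Q) ▸ SimpleGraph.Reachable.refl P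
  | succ n ih =>
    intro A B A' B' hU hd hU' hd' hpA hnB hpA' hnB' hcard P Q hP hQ
    by_cases hAA : A = A'
    · have hBB : B = B' := by
        have h1 : B = S \ A := by rw [← hU, Finset.union_sdiff_cancel_left hd]
        have h2 : B' = S \ A' := by rw [← hU', Finset.union_sdiff_cancel_left hd']
        rw [h1, h2, hAA]
      subst hAA; subst hBB
      exact (vertex_ext (hP.trans hQ.symm) : P = Q) ▸ SimpleGraph.Reachable.refl P
    · by_cases hex : (A \ A').Nonempty
      · obtain ⟨x, hx⟩ := hex
        have hxA : x ∈ A := (Finset.mem_sdiff.1 hx).1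
        have hxA' : x ∉ A' := (Finset.mem_sdiff.1 hx).2
        -- move x from the A side to the B side
        set A1 := A.erase x with hA1
        set B1 := insert x B with hB1
        have hxpos : x ∉ pos S v := fun h => hxA' (hpA' h)
        have hpA1 : pos S v ⊆ A1 := fun y hy =>
          Finset.mem_erase.2 ⟨fun h => hxpos (h ▸ hy), hpA hy⟩
        have hnB1 : neg S v ⊆ B1 := fun y hy => Finset.mem_insert_of_mem (hnB hy)
        have hxB : x ∉ B := Finset.disjoint_left.1 hd hxA
        have hd1 : Disjoint A1 B1 := by
          rw [hB1, Finset.disjoint_insert_right]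
          exact ⟨Finset.notMem_erase x A, Finset.disjoint_of_subset_left (Finset.erase_subset _ _) hd⟩
        have hU1 : A1 ∪ B1 = S := by
          rw [← hU]
          ext y
          simp only [hA1, hB1, Finset.mem_union, Finset.mem_erase, Finset.mem_insert]
          constructor
          · rintro (⟨-, h⟩ | (rfl | h))
            · exact Or.inl h
            · exact Or.inl hxA
            · exact Or.inr h
          · rintro (h | h)
            · by_cases hyx : y = x
              · exact Or.inr (Or.inl hyx)
              · exact Or.inl ⟨hyx, h⟩
            · exact Or.inr (Or.inr h)
        obtain ⟨R, hR⟩ := exists_vertex S A1 B1 ((pos_nonempty hdep).mono hpA1)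
          ⟨x, Finset.mem_insert_self x B⟩ hd1 hU1 (hull_inter_nonempty hdep hpA1 hnB1)
        have hadj : (tverbergGraph S 2).Adj P R := by
          refine adj_move (A := A1) (B := B) (x := x)
            ((pos_nonempty hdep).mono hpA1) ((neg_nonempty hdep).mono hnB)
            (Finset.notMem_erase x A) hxB
            (Finset.disjoint_of_subset_left (Finset.erase_subset _ _) hd)
            (by rw [hA1, Finset.insert_erase hxA]; exact hU)
            (by rw [hA1, Finset.insert_erase hxA]; exact hP) hR
        have hsub : (A1 \ A' ∪ A' \ A1) ⊆ ((A \ A') ∪ (A' \ A)).erase x := by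
          intro y hy
          rcases Finset.mem_union.1 hy with h | h
          · have h1 := Finset.mem_sdiff.1 h
            have hyA : y ∈ A := Finset.mem_of_mem_erase h1.1
            have hyx : y ≠ x := Finset.ne_of_mem_erase h1.1
            exact Finset.mem_erase.2
              ⟨hyx, Finset.mem_union_left _ (Finset.mem_sdiff.2 ⟨hyA, h1.2⟩)⟩
          · have h1 := Finset.mem_sdiff.1 h
            have hyx : y ≠ x := fun hh => hxA' (hh ▸ h1.1)
            have hyA : y ∉ A := fun hh => h1.2 (Finset.mem_erase.2 ⟨hyx, hh⟩)
            exact Finset.mem_erase.2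
              ⟨hyx, Finset.mem_union_right _ (Finset.mem_sdiff.2 ⟨h1.1, hyA⟩)⟩
        have hcard1 : ((A1 \ A') ∪ (A' \ A1)).card ≤ n := by
          have hxm : x ∈ (A \ A') ∪ (A' \ A) := Finset.mem_union_left _ hx
          have h2 := Finset.card_le_card hsub
          rw [Finset.card_erase_of_mem hxm] at h2
          omega
        exact hadj.reachable.trans
          (ih A1 B1 A' B' hU1 hd1 hU' hd' hpA1 hnB1 hpA' hnB' hcard1 R Q hR hQ)
      · -- A ⊆ A', so A' \ A is nonempty; move a point from the B side to the A side
        have hAsub : A ⊆ A' := by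
          rw [← Finset.sdiff_eq_empty_iff_subset]
          exact Finset.not_nonempty_iff_eq_empty.1 hex
        have hex' : (A' \ A).Nonempty := by
          rcases Finset.eq_empty_or_nonempty (A' \ A) with h | h
          · exact absurd (Finset.Subset.antisymm hAsub (Finset.sdiff_eq_empty_iff_subset.1 h)) hAA
          · exact h
        obtain ⟨x, hx⟩ := hex'
        have hxA' : x ∈ A' := (Finset.mem_sdiff.1 hx).1
        have hxA : x ∉ A := (Finset.mem_sdiff.1 hx).2
        have hxS : x ∈ S := hU' ▸ Finset.mem_union_left _ hxA'
        have hxB : x ∈ B := by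
          rcases Finset.mem_union.1 (hU ▸ hxS : x ∈ A ∪ B) with h | h
          · exact absurd h hxA
          · exact h
        set A1 := insert x A with hA1
        set B1 := B.erase x with hB1
        have hxneg : x ∉ neg S v := fun h => (Finset.disjoint_left.1 hd' hxA') (hnB' h)
        have hpA1 : pos S v ⊆ A1 := fun y hy => Finset.mem_insert_of_mem (hpA hy)
        have hnB1 : neg S v ⊆ B1 := fun y hy =>
          Finset.mem_erase.2 ⟨fun h => hxneg (h ▸ hy), hnB hy⟩
        have hd1 : Disjoint A1 B1 := by
          rw [hA1, Finset.disjoint_insert_left]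
          exact ⟨Finset.notMem_erase x B,
            Finset.disjoint_of_subset_right (Finset.erase_subset _ _) hd⟩
        have hU1 : A1 ∪ B1 = S := by
          rw [← hU]
          ext y
          simp only [hA1, hB1, Finset.mem_union, Finset.mem_erase, Finset.mem_insert]
          constructor
          · rintro ((rfl | h) | ⟨-, h⟩)
            · exact Or.inr hxB
            · exact Or.inl h
            · exact Or.inr h
          · rintro (h | h)
            · exact Or.inl (Or.inr h)
            · by_cases hyx : y = x
              · exact Or.inl (Or.inl hyx)
              · exact Or.inr ⟨hyx, h⟩
        obtain ⟨R, hR⟩ := exists_vertex S A1 B1 ⟨x, Finset.mem_insert_self x A⟩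
          ((neg_nonempty hdep).mono hnB1) hd1 hU1 (hull_inter_nonempty hdep hpA1 hnB1)
        have hadj : (tverbergGraph S 2).Adj R P := by
          refine adj_move (A := A) (B := B1) (x := x)
            ((pos_nonempty hdep).mono hpA) ((neg_nonempty hdep).mono hnB1)
            hxA (Finset.notMem_erase x B)
            (Finset.disjoint_of_subset_right (Finset.erase_subset _ _) hd)
            hU1 hR (by rw [hB1, Finset.insert_erase hxB]; exact hP)
        have hsub : (A1 \ A' ∪ A' \ A1) ⊆ ((A \ A') ∪ (A' \ A)).erase x := by
          intro y hy
          rcases Finset.mem_union.1 hy with h | h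
          · have h1 := Finset.mem_sdiff.1 h
            have hyx : y ≠ x := fun hh => h1.2 (hh ▸ hxA')
            have hyA : y ∈ A := by
              rcases Finset.mem_insert.1 h1.1 with h2 | h2
              · exact absurd h2 hyx
              · exact h2
            exact Finset.mem_erase.2
              ⟨hyx, Finset.mem_union_left _ (Finset.mem_sdiff.2 ⟨hyA, h1.2⟩)⟩
          · have h1 := Finset.mem_sdiff.1 h
            have hyx : y ≠ x := fun hh => h1.2 (hh ▸ Finset.mem_insert_self x A)
            have hyA : y ∉ A := fun hh => h1.2 (Finset.mem_insert_of_mem hh)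
            exact Finset.mem_erase.2
              ⟨hyx, Finset.mem_union_right _ (Finset.mem_sdiff.2 ⟨h1.1, hyA⟩)⟩
        have hcard1 : ((A1 \ A') ∪ (A' \ A1)).card ≤ n := by
          have hxm : x ∈ (A \ A') ∪ (A' \ A) := Finset.mem_union_right _ hx
          have h2 := Finset.card_le_card hsub
          rw [Finset.card_erase_of_mem hxm] at h2
          omega
        exact hadj.symm.reachable.trans
          (ih A1 B1 A' B' hU1 hd1 hU' hd' hpA1 hnB1 hpA' hnB' hcard1 R Q hR hQ)

/-- Every Radon partition comes from an affine dependence. -/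
lemma extract {S : Finset E} (P : TverbergPartition S 2) :
    ∃ (v : E → ℝ) (A B : Finset E), IsDep S v ∧ A ∪ B = S ∧ Disjoint A B ∧
      pos S v ⊆ A ∧ neg S v ⊆ B ∧ P.1.parts = {A, B} := by
  obtain ⟨A, B, hne, hparts⟩ := Finset.card_eq_two.1 P.2.1
  have hU : A ∪ B = S := by
    have h := P.1.sup_parts
    rw [hparts, Finset.sup_insert, Finset.sup_singleton] at h
    rw [← h]; rfl
  have hd : Disjoint A B := by
    have h := P.1.supIndep
    rw [hparts] at h
    exact (Finset.supIndep_pair hne).1 h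
  have hAS : A ⊆ S := hU ▸ Finset.subset_union_left
  have hBS : B ⊆ S := hU ▸ Finset.subset_union_right
  obtain ⟨q, hq⟩ := P.2.2
  simp only [Set.mem_iInter] at hq
  have hqA : q ∈ convexHull ℝ (A : Set E) :=
    hq A (by rw [hparts]; exact Finset.mem_insert_self _ _)
  have hqB : q ∈ convexHull ℝ (B : Set E) :=
    hq B (by rw [hparts]; exact Finset.mem_insert_of_mem (Finset.mem_singleton_self B))
  rw [Finset.convexHull_eq] at hqA hqB
  obtain ⟨wA, hwA0, hwA1, hwAc⟩ := hqA
  obtain ⟨wB, hwB0, hwB1, hwBc⟩ := hqB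
  classical
  set v : E → ℝ := fun y => (if y ∈ A then wA y else 0) - (if y ∈ B then wB y else 0) with hv
  have hvA : ∀ y ∈ A, v y = wA y := by
    intro y hy
    simp only [hv, if_pos hy, if_neg (Finset.disjoint_left.1 hd hy), sub_zero]
  have hvB : ∀ y ∈ B, v y = -wB y := by
    intro y hy
    simp only [hv, if_neg (Finset.disjoint_right.1 hd hy), if_pos hy, zero_sub]
  refine ⟨v, A, B, ⟨?_, ?_, ?_⟩, hU, hd, ?_, ?_, hparts⟩
  · have h1 : ∑ y ∈ S, (if y ∈ A then wA y else 0) = ∑ y ∈ A, wA y := by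
      rw [Finset.sum_ite_mem, Finset.inter_eq_right.2 hAS]
    have h2 : ∑ y ∈ S, (if y ∈ B then wB y else 0) = ∑ y ∈ B, wB y := by
      rw [Finset.sum_ite_mem, Finset.inter_eq_right.2 hBS]
    simp only [hv, Finset.sum_sub_distrib, h1, h2, hwA1, hwB1, sub_self]
  · have h1 : ∑ y ∈ S, (if y ∈ A then wA y else 0) • y = ∑ y ∈ A, wA y • y := by
      calc ∑ y ∈ S, (if y ∈ A then wA y else 0) • y
          = ∑ y ∈ S, (if y ∈ A then wA y • y else 0) :=
            Finset.sum_congr rfl fun y _ => by split <;> simp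
        _ = ∑ y ∈ S ∩ A, wA y • y := Finset.sum_ite_mem _ _ _
        _ = ∑ y ∈ A, wA y • y := by rw [Finset.inter_eq_right.2 hAS]
    have h2 : ∑ y ∈ S, (if y ∈ B then wB y else 0) • y = ∑ y ∈ B, wB y • y := by
      calc ∑ y ∈ S, (if y ∈ B then wB y else 0) • y
          = ∑ y ∈ S, (if y ∈ B then wB y • y else 0) :=
            Finset.sum_congr rfl fun y _ => by split <;> simp
        _ = ∑ y ∈ S ∩ B, wB y • y := Finset.sum_ite_mem _ _ _
        _ = ∑ y ∈ B, wB y • y := by rw [Finset.inter_eq_right.2 hBS]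
    have hA' : ∑ y ∈ A, wA y • y = q := by
      rw [← Finset.centerMass_eq_of_sum_1 _ _ hwA1] at *
      exact hwAc
    have hB' : ∑ y ∈ B, wB y • y = q := by
      rw [← Finset.centerMass_eq_of_sum_1 _ _ hwB1] at *
      exact hwBc
    calc ∑ y ∈ S, v y • y
        = ∑ y ∈ S, ((if y ∈ A then wA y else 0) • y - (if y ∈ B then wB y else 0) • y) :=
          Finset.sum_congr rfl fun y _ => by rw [hv]; rw [sub_smul]
      _ = ∑ y ∈ S, (if y ∈ A then wA y else 0) • y
            - ∑ y ∈ S, (if y ∈ B then wB y else 0) • y := Finset.sum_sub_distrib _ _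
      _ = 0 := by rw [h1, h2, hA', hB', sub_self]
  · by_contra hcon
    push_neg at hcon
    have hzero : ∀ y ∈ A, v y = 0 := fun y hy => hcon y (hAS hy)
    have : ∑ y ∈ A, v y = 1 := by
      rw [Finset.sum_congr rfl hvA, hwA1]
    rw [Finset.sum_congr rfl hzero, Finset.sum_const_zero] at this
    exact one_ne_zero this.symm
  · intro y hy
    have hyS : y ∈ S := (Finset.mem_filter.1 hy).1
    have hypos : 0 < v y := (Finset.mem_filter.1 hy).2
    by_contra hyA
    have : v y ≤ 0 := by
      simp only [hv, if_neg hyA, zero_sub, neg_nonpos]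
      split
      · exact hwB0 y (by assumption)
      · exact le_refl 0
    linarith
  · intro y hy
    have hyS : y ∈ S := (Finset.mem_filter.1 hy).1
    have hyneg : v y < 0 := (Finset.mem_filter.1 hy).2
    by_contra hyB
    have : 0 ≤ v y := by
      simp only [hv, if_neg hyB, sub_zero]
      split
      · exact hwA0 y (by assumption)
      · exact le_refl 0
    linarith

/-- Points where two dependences have strictly opposite signs. -/
noncomputable def confl (S : Finset E) (v w : E → ℝ) : Finset E :=
  S.filter fun y => v y * w y < 0

lemma reach_noconf {S : Finset E} {v w : E → ℝ} (hdv : IsDep S v) (hdw : IsDep S w)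
    (hc : confl S v w = ∅) {A B A' B' : Finset E} {P Q : TverbergPartition S 2}
    (hU : A ∪ B = S) (hd : Disjoint A B) (hU' : A' ∪ B' = S) (hd' : Disjoint A' B')
    (hpv : pos S v ⊆ A) (hnv : neg S v ⊆ B) (hpw : pos S w ⊆ A') (hnw : neg S w ⊆ B')
    (hP : P.1.parts = {A, B}) (hQ : Q.1.parts = {A', B'}) :
    (tverbergGraph S 2).Reachable P Q := by
  classical
  set R1 := S.filter (fun y => 0 < v y ∨ 0 < w y) with hR1
  set R2 := S \ R1 with hR2
  have hUR : R1 ∪ R2 = S := Finset.union_sdiff_of_subset (Finset.filter_subset _ _)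
  have hdR : Disjoint R1 R2 := Finset.disjoint_sdiff
  have hpvR : pos S v ⊆ R1 := fun y hy =>
    Finset.mem_filter.2 ⟨(Finset.mem_filter.1 hy).1, Or.inl (Finset.mem_filter.1 hy).2⟩
  have hpwR : pos S w ⊆ R1 := fun y hy =>
    Finset.mem_filter.2 ⟨(Finset.mem_filter.1 hy).1, Or.inr (Finset.mem_filter.1 hy).2⟩
  have hkey : ∀ y ∈ S, v y * w y < 0 → False := by
    intro y hy hmul
    have : y ∈ confl S v w := Finset.mem_filter.2 ⟨hy, hmul⟩
    rw [hc] at this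
    exact Finset.notMem_empty y this
  have hnvR : neg S v ⊆ R2 := by
    intro y hy
    have h1 := Finset.mem_filter.1 hy
    refine Finset.mem_sdiff.2 ⟨h1.1, fun hmem => ?_⟩
    rcases (Finset.mem_filter.1 hmem).2 with h | h
    · linarith [h1.2]
    · exact hkey y h1.1 (mul_neg_of_neg_of_pos h1.2 h)
  have hnwR : neg S w ⊆ R2 := by
    intro y hy
    have h1 := Finset.mem_filter.1 hy
    refine Finset.mem_sdiff.2 ⟨h1.1, fun hmem => ?_⟩
    rcases (Finset.mem_filter.1 hmem).2 with h | h
    · exact hkey y h1.1 (mul_neg_of_pos_of_neg h h1.2)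
    · linarith [h1.2]
  obtain ⟨R, hR⟩ := exists_vertex S R1 R2 ((pos_nonempty hdv).mono hpvR)
    ((neg_nonempty hdv).mono hnvR) hdR hUR (hull_inter_nonempty hdv hpvR hnvR)
  exact (reach_of_compat hdv _ A B R1 R2 hU hd hUR hdR hpv hnv hpvR hnvR le_rfl P R hP hR).trans
    (reach_of_compat hdw _ R1 R2 A' B' hUR hdR hU' hd' hpwR hnwR hpw hnw le_rfl R Q hR hQ)

lemma reach_main {S : Finset E} :
    ∀ (n : ℕ) (v w : E → ℝ), IsDep S v → IsDep S w → (confl S v w).card ≤ n →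
    ∀ (A B A' B' : Finset E) (P Q : TverbergPartition S 2),
    A ∪ B = S → Disjoint A B → A' ∪ B' = S → Disjoint A' B' →
    pos S v ⊆ A → neg S v ⊆ B → pos S w ⊆ A' → neg S w ⊆ B' →
    P.1.parts = {A, B} → Q.1.parts = {A', B'} →
    (tverbergGraph S 2).Reachable P Q := by
  intro n
  induction n with
  | zero =>
    intro v w hdv hdw hcard A B A' B' P Q hU hd hU' hd' hpv hnv hpw hnw hP hQ
    exact reach_noconf hdv hdw (Finset.card_eq_zero.1 (Nat.le_zero.1 hcard))
      hU hd hU' hd' hpv hnv hpw hnw hP hQ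
  | succ n ih =>
    intro v w hdv hdw hcard A B A' B' P Q hU hd hU' hd' hpv hnv hpw hnw hP hQ
    by_cases hc : confl S v w = ∅
    · exact reach_noconf hdv hdw hc hU hd hU' hd' hpv hnv hpw hnw hP hQ
    · obtain ⟨x, hx⟩ := Finset.nonempty_iff_ne_empty.2 hc
      have hxS : x ∈ S := (Finset.mem_filter.1 hx).1
      have hxc : v x * w x < 0 := (Finset.mem_filter.1 hx).2
      set a := |w x| with ha'
      set b := |v x| with hb'
      have ha : 0 < a := abs_pos.2 fun h => by rw [h, mul_zero] at hxc; exact lt_irrefl 0 hxc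
      have hb : 0 < b := abs_pos.2 fun h => by rw [h, zero_mul] at hxc; exact lt_irrefl 0 hxc
      set u : E → ℝ := fun y => a * v y + b * w y with hu
      have hux : u x = 0 := by
        show a * v x + b * w x = 0
        rcases mul_neg_iff.1 hxc with ⟨h1, h2⟩ | ⟨h1, h2⟩
        · rw [ha', hb', abs_of_neg h2, abs_of_pos h1]; ring
        · rw [ha', hb', abs_of_pos h2, abs_of_neg h1]; ring
      by_cases hu0 : ∀ y ∈ S, u y = 0
      · -- `w` is a negative multiple of `v` on `S`; swap the sides
        have hps : pos S w = neg S v := by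
          ext y
          simp only [pos, neg, Finset.mem_filter, and_congr_right_iff]
          intro hy
          have h0 : a * v y + b * w y = 0 := hu0 y hy
          constructor <;> intro h <;> nlinarith
        have hns : neg S w = pos S v := by
          ext y
          simp only [pos, neg, Finset.mem_filter, and_congr_right_iff]
          intro hy
          have h0 : a * v y + b * w y = 0 := hu0 y hy
          constructor <;> intro h <;> nlinarith
        have h1 : pos S v ⊆ B' := hns ▸ hnw
        have h2 : neg S v ⊆ A' := hps ▸ hpw
        have hQ' : Q.1.parts = {B', A'} := by rw [hQ, Finset.pair_comm]
        exact reach_of_compat hdv _ A B B' A' hU hd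
          (by rw [Finset.union_comm]; exact hU') hd'.symm hpv hnv h1 h2 le_rfl P Q hP hQ'
      · push_neg at hu0
        obtain ⟨y0, hy0S, hy0⟩ := hu0
        have hdu : IsDep S u := by
          refine ⟨?_, ?_, y0, hy0S, hy0⟩
          · show ∑ y ∈ S, (a * v y + b * w y) = 0
            rw [Finset.sum_add_distrib, ← Finset.mul_sum, ← Finset.mul_sum, hdv.1, hdw.1]
            ring
          · show ∑ y ∈ S, (a * v y + b * w y) • y = 0
            calc ∑ y ∈ S, (a * v y + b * w y) • y
                = ∑ y ∈ S, (a • (v y • y) + b • (w y • y)) :=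
                  Finset.sum_congr rfl fun y _ => by
                    rw [add_smul, mul_smul, mul_smul]
              _ = a • ∑ y ∈ S, v y • y + b • ∑ y ∈ S, w y • y := by
                  rw [Finset.sum_add_distrib, Finset.smul_sum, Finset.smul_sum]
              _ = 0 := by rw [hdv.2.1, hdw.2.1, smul_zero, smul_zero, add_zero]
        have hcvu : confl S v u ⊆ (confl S v w).erase x := by
          intro y hy
          have h1 := Finset.mem_filter.1 hy
          have hyx : y ≠ x := by
            rintro rfl
            rw [hux, mul_zero] at h1
            exact lt_irrefl 0 h1.2
          refine Finset.mem_erase.2 ⟨hyx, Finset.mem_filter.2 ⟨h1.1, ?_⟩⟩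
          by_contra hcon
          push_neg at hcon
          have he : v y * u y = a * (v y * v y) + b * (v y * w y) := by
            show v y * (a * v y + b * w y) = _; ring
          have : 0 ≤ v y * u y := by
            rw [he]
            exact add_nonneg (mul_nonneg ha.le (mul_self_nonneg _)) (mul_nonneg hb.le hcon)
          linarith [h1.2]
        have hcuw : confl S u w ⊆ (confl S v w).erase x := by
          intro y hy
          have h1 := Finset.mem_filter.1 hy
          have hyx : y ≠ x := by
            rintro rfl
            rw [hux, zero_mul] at h1
            exact lt_irrefl 0 h1.2
          refine Finset.mem_erase.2 ⟨hyx, Finset.mem_filter.2 ⟨h1.1, ?_⟩⟩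
          by_contra hcon
          push_neg at hcon
          have he : u y * w y = a * (v y * w y) + b * (w y * w y) := by
            show (a * v y + b * w y) * w y = _; ring
          have : 0 ≤ u y * w y := by
            rw [he]
            exact add_nonneg (mul_nonneg ha.le hcon) (mul_nonneg hb.le (mul_self_nonneg _))
          linarith [h1.2]
        have hcard' : ∀ {c : Finset E}, c ⊆ (confl S v w).erase x → c.card ≤ n := by
          intro c hsub
          have h2 := Finset.card_le_card hsub
          rw [Finset.card_erase_of_mem hx] at h2
          omega
        set R1 := pos S u with hR1
        set R2 := S \ R1 with hR2
        have hUR : R1 ∪ R2 = S := Finset.union_sdiff_of_subset (Finset.filter_subset _ _)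
        have hdR : Disjoint R1 R2 := Finset.disjoint_sdiff
        have hnuR : neg S u ⊆ R2 := by
          intro y hy
          have h1 := Finset.mem_filter.1 hy
          refine Finset.mem_sdiff.2 ⟨h1.1, fun hmem => ?_⟩
          have := (Finset.mem_filter.1 hmem).2
          linarith [h1.2]
        obtain ⟨R, hR⟩ := exists_vertex S R1 R2 (pos_nonempty hdu)
          ((neg_nonempty hdu).mono hnuR) hdR hUR
          (hull_inter_nonempty hdu subset_rfl hnuR)
        exact (ih v u hdv hdu (hcard' hcvu) A B R1 R2 P R hU hd hUR hdR hpv hnv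
            subset_rfl hnuR hP hR).trans
          (ih u w hdu hdw (hcard' hcuw) R1 R2 A' B' R Q hUR hdR hU' hd'
            subset_rfl hnuR hpw hnw hR hQ)

end RadonAux

/-- The Radon partition graph `G_T[S,2]` of any finite set of points in `ℝ^d` is
connected (a graph with no vertices or a single vertex counts as connected, so we state
preconnectedness, which for nonempty graphs is connectedness). -/
theorem radonGraph_connected (d : ℕ) (S : Finset (EuclideanSpace ℝ (Fin d))) :
    (tverbergGraph S 2).Preconnected := by
  intro P Q
  obtain ⟨v, A, B, hdv, hU, hd, hpv, hnv, hP⟩ := RadonAux.extract P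
  obtain ⟨w, A', B', hdw, hU', hd', hpw, hnw, hQ⟩ := RadonAux.extract Q
  exact RadonAux.reach_main (RadonAux.confl S v w).card v w hdv hdw le_rfl
    A B A' B' P Q hU hd hU' hd' hpv hnv hpw hnw hP hQ
end
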